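/- Let P, Q, R be n×n matrices over a field with Q invertible. Then det [[0,P,Q],[-P,0,R],[-Q,-R,0]] = (det Q)² · det(PQ⁻¹R − RQ⁻¹P). -/

import Mathlib

/-- The 3×3 block matrix with n×n blocks. -/
def block3 {n : ℕ} {R : Type*} [CommRing R]
    (A B C D E F G H I : Matrix (Fin n) (Fin n) R) :
    Matrix (Fin 3 × Fin n) (Fin 3 × Fin n) R :=
  fun p q => ![![A, B, C], ![D, E, F], ![G, H, I]] p.1 q.1 p.2 q.2

open Matrix in
def e3 {n : ℕ} : Fin 3 × Fin n ≃ (Fin n ⊕ (Fin n ⊕ Fin n)) where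
  toFun p := match p with
    | (⟨0, _⟩, i) => Sum.inl i
    | (⟨1, _⟩, i) => Sum.inr (Sum.inl i)
    | (⟨2, _⟩, i) => Sum.inr (Sum.inr i)
  invFun := Sum.elim (fun i => (0, i)) (Sum.elim (fun i => (1, i)) fun i => (2, i))
  left_inv := by rintro ⟨⟨j, hj⟩, i⟩; interval_cases j <;> rfl
  right_inv := by rintro (i | i | i) <;> rfl

open Matrix in
/-- det [[0,P,Q],[-P,0,R],[-Q,-R,0]] = (det Q)² · det(PQ⁻¹R − RQ⁻¹P) for Q invertible. -/
theorem det_block3 {n : ℕ} {K : Type*} [Field K]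
    (P Q R : Matrix (Fin n) (Fin n) K) (hQ : IsUnit Q.det) :
    (block3 0 P Q (-P) 0 R (-Q) (-R) 0).det
      = Q.det ^ 2 * (P * Q⁻¹ * R - R * Q⁻¹ * P).det := by
  haveI : Invertible Q := Q.invertibleOfIsUnitDet hQ
  set σ : Equiv.Perm (Fin 3 × Fin n) :=
    Equiv.prodCongrLeft (fun _ : Fin n => Equiv.swap (0 : Fin 3) 2) with hσ
  set M : Matrix (Fin 3 × Fin n) (Fin 3 × Fin n) K :=
    block3 Q P 0 R 0 (-P) 0 (-R) (-Q) with hM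
  have h1 : block3 0 P Q (-P) 0 R (-Q) (-R) 0 = M.submatrix id σ := by
    ext ⟨j, i⟩ ⟨k, l⟩
    fin_cases j <;> fin_cases k <;>
      simp [block3, hM, hσ, Equiv.prodCongrLeft, Equiv.prodCongrLeft_apply, Equiv.swap_apply_def, Matrix.submatrix]
  set N : Matrix (Fin n ⊕ (Fin n ⊕ Fin n)) (Fin n ⊕ (Fin n ⊕ Fin n)) K :=
    fromBlocks Q (fromCols P 0) (fromRows R 0) (fromBlocks 0 (-P) (-R) (-Q)) with hN
  have h2 : M = N.submatrix e3 e3 := by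
    ext ⟨j, i⟩ ⟨k, l⟩
    fin_cases j <;> fin_cases k <;>
      rfl
  have hsign : (Equiv.Perm.sign σ : K) = (-1 : K) ^ n := by
    rw [hσ, Equiv.Perm.sign_prodCongrLeft]
    simp [Equiv.Perm.sign_swap (by decide : (0 : Fin 3) ≠ 2)]
  have hdetN : N.det = Q.det * ((-1:K)^n * (Q.det * (P * Q⁻¹ * R - R * Q⁻¹ * P).det)) := by
    rw [hN, det_fromBlocks₁₁, invOf_eq_nonsing_inv]
    congr 1
    have : fromRows R (0 : Matrix (Fin n) (Fin n) K) * Q⁻¹ *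
          fromCols P (0 : Matrix (Fin n) (Fin n) K)
        = fromBlocks (R * Q⁻¹ * P) (0 : Matrix (Fin n) (Fin n) K)
            (0 : Matrix (Fin n) (Fin n) K) (0 : Matrix (Fin n) (Fin n) K) := by
      rw [fromRows_mul, fromRows_mul_fromCols]
      simp
    rw [this]
    have : fromBlocks 0 (-P) (-R) (-Q) - fromBlocks (R * Q⁻¹ * P) 0 0 0
        = - fromBlocks (R * Q⁻¹ * P) P R Q := by
      ext (i | i) (j | j) <;> simp
    rw [this, det_neg]
    have hcard : Fintype.card (Fin n ⊕ Fin n) = 2 * n := by simp [two_mul]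
    rw [hcard, pow_mul]
    norm_num
    rw [det_fromBlocks₂₂, invOf_eq_nonsing_inv]
    have : R * Q⁻¹ * P - P * Q⁻¹ * R = -(P * Q⁻¹ * R - R * Q⁻¹ * P) := (neg_sub _ _).symm
    rw [this, det_neg]
    simp [Fintype.card_fin]
    ring
  rw [h1, det_permute', h2, det_submatrix_equiv_self, hdetN, hsign]
  ring_nf
  rw [pow_mul']
  norm_num
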